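/- Let A be a sequence of length m over an alphabet, and define a bit vector C of length m by C[k] = 1 iff position k is the first occurrence of the value A[k] in A. Let q be the number of zeros in C and let D[1..q] list, in order, the values A[k] for positions k with C[k] = 0. Then A is completely determined by C, D, and the map sending j to the value of the j-th distinct first occurrence; in particular A[k] can be recovered as: if C[k]=1 then the (rank of 1s up to k)-th distinct value, else D[rank of 0s up to k]. -/

import Mathlib

/-- `isFirstB A k` is true iff position `k` is the first occurrence of the value
`A k` in the sequence `A`. -/
def isFirstB {α : Type} [DecidableEq α] {m : ℕ} (A : Fin m → α) (k : Fin m) : Bool :=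
  decide (∀ j : Fin m, j < k → A j ≠ A k)

/-- `rank1 A k` = number of 1s (first occurrences) in positions `≤ k`. -/
def rank1 {α : Type} [DecidableEq α] {m : ℕ} (A : Fin m → α) (k : Fin m) : ℕ :=
  (Finset.univ.filter (fun j : Fin m => j ≤ k ∧ isFirstB A j = true)).card

/-- `rank0 A k` = number of 0s (repeated occurrences) in positions `≤ k`. -/
def rank0 {α : Type} [DecidableEq α] {m : ℕ} (A : Fin m → α) (k : Fin m) : ℕ :=
  (Finset.univ.filter (fun j : Fin m => j ≤ k ∧ isFirstB A j = false)).card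

/-- The list of distinct values of `A`, in order of their first occurrences. -/
def Flist {α : Type} [DecidableEq α] {m : ℕ} (A : Fin m → α) : List α :=
  ((List.finRange m).filter (fun j => isFirstB A j)).map A

/-- The list of values of `A` at non-first-occurrence positions, in order. -/
def Dlist {α : Type} [DecidableEq α] {m : ℕ} (A : Fin m → α) : List α :=
  ((List.finRange m).filter (fun j => !isFirstB A j)).map A

/-- First-occurrence encoding: a sequence `A` is completely determined by the bit
vector `C` of first occurrences (via `isFirstB`), the list `D` of values at non-first
positions, and the list of distinct first-occurrence values; namely `A k` is
recovered as the `rank1(k)`-th distinct value when `C[k] = 1`, and as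
`D[rank0(k)]` when `C[k] = 0`. -/
lemma mem_take_finRange {m n : ℕ} (j : Fin m) :
    j ∈ (List.finRange m).take n ↔ (j : ℕ) < n := by
  rw [List.mem_take_iff_getElem]
  constructor
  · rintro ⟨i, hi, rfl⟩
    simp only [List.getElem_finRange]
    exact lt_of_lt_of_le (lt_min_iff.mp hi).1 le_rfl
  · intro hj
    refine ⟨(j : ℕ), ?_, ?_⟩
    · simp [lt_min_iff, hj, j.isLt]
    · simp [List.getElem_finRange, Fin.ext_iff]

lemma filter_take_len {m : ℕ} (p : Fin m → Bool) (k : Fin m) :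
    (((List.finRange m).take (k : ℕ)).filter p).length
      = (Finset.univ.filter (fun j : Fin m => j < k ∧ p j = true)).card := by
  have hnd : (((List.finRange m).take (k : ℕ)).filter p).Nodup :=
    (List.filter_sublist.trans ((List.finRange m).take_sublist _)).nodup
      (List.nodup_finRange m)
  rw [← List.toFinset_card_of_nodup hnd]
  congr 1
  ext j
  rw [List.mem_toFinset, List.mem_filter, mem_take_finRange, Finset.mem_filter]
  simp only [Finset.mem_univ, true_and, Fin.lt_def, and_comm]

lemma card_le_split {m : ℕ} (p : Fin m → Bool) (k : Fin m) (hk : p k = true) :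
    (Finset.univ.filter (fun j : Fin m => j ≤ k ∧ p j = true)).card
      = (Finset.univ.filter (fun j : Fin m => j < k ∧ p j = true)).card + 1 := by
  have : (Finset.univ.filter (fun j : Fin m => j ≤ k ∧ p j = true))
      = insert k (Finset.univ.filter (fun j : Fin m => j < k ∧ p j = true)) := by
    ext j
    simp only [Finset.mem_filter, Finset.mem_insert, Finset.mem_univ, true_and]
    constructor
    · rintro ⟨hle, hp⟩
      rcases lt_or_eq_of_le hle with h | h
      · exact Or.inr ⟨h, hp⟩
      · exact Or.inl h
    · rintro (rfl | ⟨hlt, hp⟩)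
      · exact ⟨le_rfl, hk⟩
      · exact ⟨le_of_lt hlt, hp⟩
  rw [this, Finset.card_insert_of_notMem (by simp)]

lemma key {α : Type} {m : ℕ} (A : Fin m → α) (p : Fin m → Bool) (k : Fin m)
    (hk : p k = true) :
    (((List.finRange m).filter p).map A)[
      ((Finset.univ.filter (fun j : Fin m => j ≤ k ∧ p j = true)).card - 1)]?
      = some (A k) := by
  have hlen : (k : ℕ) < (List.finRange m).length := by simp [k.isLt]
  have hget : (List.finRange m)[(k : ℕ)] = k := by
    simp [List.getElem_finRange, Fin.ext_iff]
  have hsplit : List.finRange m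
      = (List.finRange m).take (k : ℕ) ++ k :: (List.finRange m).drop ((k : ℕ) + 1) := by
    conv_lhs => rw [← List.take_append_drop (k : ℕ) (List.finRange m)]
    rw [List.drop_eq_getElem_cons hlen, hget]
  rw [card_le_split p k hk, Nat.add_sub_cancel, ← filter_take_len p k]
  conv_lhs => rw [hsplit]
  rw [List.filter_append, List.filter_cons_of_pos hk, List.map_append, List.map_cons]
  rw [List.getElem?_append_right (by simp)]
  simp

theorem first_occurrence_encoding {α : Type} [DecidableEq α] {m : ℕ}
    (A : Fin m → α) (k : Fin m) :
    (isFirstB A k = true → (Flist A)[rank1 A k - 1]? = some (A k)) ∧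
    (isFirstB A k = false → (Dlist A)[rank0 A k - 1]? = some (A k)) := by
  constructor
  · intro h
    exact key A (fun j => isFirstB A j) k h
  · intro h
    have h' : (!isFirstB A k) = true := by simp [h]
    have := key A (fun j => !isFirstB A j) k h'
    simpa [Dlist, rank0, Bool.not_eq_true'] using this
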